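/- L² bound of the angular spectrum representation on horizontal lines: for every a ≥ h, the restriction x₁ ↦ u(x₁, a) is square integrable on ℝ and ∫_ℝ |u(x₁, a)|² dx₁ ≤ 2π ∫_ℝ |F(ξ)|² dξ. -/

import Mathlib

open MeasureTheory

/-- The branch of the complex square root used for the upper half plane:
`ρ(w) := √((|w| + Re w)/2) + i √((|w| − Re w)/2)`; for `Im w ≥ 0` it satisfies
`ρ(w)² = w`, `Re ρ(w) ≥ 0` and `Im ρ(w) ≥ 0`. -/
noncomputable def rho (w : ℂ) : ℂ :=
  (Real.sqrt ((‖w‖ + w.re) / 2) : ℝ) +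
    Complex.I * (Real.sqrt ((‖w‖ - w.re) / 2) : ℝ)

/-- The angular spectrum representation
`u(x₁,x₂) = ∫ exp(i((x₂−h) ρ(k²−ξ²) + x₁ ξ)) F(ξ) dξ`. -/
noncomputable def asr (k : ℂ) (h : ℝ) (F : SchwartzMap ℝ ℂ) (p : ℝ × ℝ) : ℂ :=
  ∫ ξ : ℝ, Complex.exp (Complex.I *
    (((p.2 - h : ℝ) : ℂ) * rho (k ^ 2 - (ξ : ℂ) ^ 2) + (p.1 : ℂ) * (ξ : ℂ))) * F ξ


open Complex Real

lemma rho_im_nonneg (w : ℂ) : 0 ≤ (rho w).im := by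
  simp only [rho, Complex.add_im, Complex.ofReal_im, Complex.mul_im, Complex.I_re,
    Complex.I_im, Complex.ofReal_re, zero_mul, one_mul, zero_add]
  positivity

lemma continuous_rho : Continuous rho := by
  have h1 : Continuous fun w : ℂ => ((Real.sqrt ((‖w‖ + w.re) / 2) : ℝ) : ℂ) :=
    Complex.continuous_ofReal.comp (Real.continuous_sqrt.comp
      (((continuous_norm.add Complex.continuous_re)).div_const 2))
  have h2 : Continuous fun w : ℂ => ((Real.sqrt ((‖w‖ - w.re) / 2) : ℝ) : ℂ) :=
    Complex.continuous_ofReal.comp (Real.continuous_sqrt.comp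
      (((continuous_norm.sub Complex.continuous_re)).div_const 2))
  exact h1.add (continuous_const.mul h2)

lemma abs_exp_le (c : ℝ) (hc : 0 ≤ c) (w : ℂ) :
    ‖Complex.exp (Complex.I * (c : ℂ) * rho w)‖ ≤ 1 := by
  rw [Complex.norm_exp]
  have : (Complex.I * (c : ℂ) * rho w).re = -(c * (rho w).im) := by
    simp [Complex.mul_re, Complex.mul_im]
  rw [this]
  exact Real.exp_le_one_iff.2 (neg_nonpos.2 (mul_nonneg hc (rho_im_nonneg w)))

lemma abs_exp_I_mul_mul (x ξ : ℝ) :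
    ‖Complex.exp (Complex.I * (x : ℂ) * (ξ : ℂ))‖ = 1 := by
  rw [Complex.norm_exp]
  have : (Complex.I * (x : ℂ) * (ξ : ℂ)).re = 0 := by simp [Complex.mul_re]
  rw [this, Real.exp_zero]

lemma kernel_eq {ε : ℝ} (hε : 0 < ε) (t : ℝ) :
    ∫ x : ℝ, Complex.exp (Complex.I * (t : ℂ) * (x : ℂ)) * Complex.exp (-(ε:ℂ) * (x:ℂ)^2)
      = ((Real.sqrt (π/ε) * Real.exp (-(1/(4*ε)) * t^2) : ℝ) : ℂ) := by
  have hb : (0:ℝ) < ((ε:ℂ)).re := by simpa using hε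
  rw [fourierIntegral_gaussian hb (t:ℂ)]
  have h1 : ((π:ℂ) / (ε:ℂ)) ^ (1/2 : ℂ) = ((Real.sqrt (π/ε) : ℝ) : ℂ) := by
    rw [Real.sqrt_eq_rpow, Complex.ofReal_cpow (by positivity)]
    push_cast
    ring_nf
  have h2 : -(t:ℂ)^2/(4*(ε:ℂ)) = ((-(1/(4*ε)) * t^2 : ℝ) : ℂ) := by
    push_cast
    field_simp
  rw [h2, h1, ← Complex.ofReal_exp, ← Complex.ofReal_mul]

lemma Kr_total {ε : ℝ} (hε : 0 < ε) :
    ∫ t : ℝ, Real.sqrt (π/ε) * Real.exp (-(1/(4*ε)) * t^2) = 2 * π := by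
  rw [MeasureTheory.integral_const_mul, integral_gaussian, ← Real.sqrt_mul (by positivity)]
  have : π / ε * (π / (1/(4*ε))) = (2*π)^2 := by field_simp; ring
  rw [this, Real.sqrt_sq (by positivity)]

lemma Kr_integrable {ε : ℝ} (hε : 0 < ε) :
    Integrable (fun t : ℝ => Real.sqrt (π/ε) * Real.exp (-(1/(4*ε)) * t^2)) :=
  (integrable_exp_neg_mul_sq (by positivity)).const_mul _

lemma u_continuous (G : ℝ → ℂ) (hGcont : Continuous G) (hGint : Integrable G) :
    Continuous (fun x : ℝ => ∫ ξ : ℝ, Complex.exp (Complex.I * (x:ℂ) * (ξ:ℂ)) * G ξ) := by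
  apply continuous_of_dominated (bound := fun ξ => ‖G ξ‖)
  · intro x
    exact ((Complex.continuous_exp.comp (by fun_prop)).mul hGcont).aestronglyMeasurable
  · intro x
    filter_upwards with ξ
    rw [norm_mul, abs_exp_I_mul_mul, one_mul]
  · exact hGint.norm
  · filter_upwards with ξ
    exact (Complex.continuous_exp.comp (by fun_prop)).mul continuous_const

lemma u_norm_le (G : ℝ → ℂ) (x : ℝ) :
    ‖∫ ξ : ℝ, Complex.exp (Complex.I * (x:ℂ) * (ξ:ℂ)) * G ξ‖ ≤ ∫ ξ : ℝ, ‖G ξ‖ := by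
  refine (norm_integral_le_integral_norm _).trans (le_of_eq ?_)
  refine integral_congr_ae (.of_forall fun ξ => ?_)
  show ‖Complex.exp (Complex.I * (x:ℂ) * (ξ:ℂ)) * G ξ‖ = ‖G ξ‖
  rw [norm_mul, abs_exp_I_mul_mul, one_mul]

theorem key_eps (G : ℝ → ℂ) (hGcont : Continuous G) (hGint : Integrable G)
    (Fb : ℝ → ℝ) (hFb_cont : Continuous Fb) (hFb_int : Integrable Fb)
    (hFb_nonneg : ∀ ξ, 0 ≤ Fb ξ)
    (hGb : ∀ ξ η, ‖G ξ‖ * ‖G η‖ ≤ (Fb ξ + Fb η)/2)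
    {ε : ℝ} (hε : 0 < ε) :
    ∫ x : ℝ, Real.exp (-ε*x^2) *
        (‖∫ ξ : ℝ, Complex.exp (Complex.I * (x:ℂ) * (ξ:ℂ)) * G ξ‖)^2
      ≤ 2 * π * ∫ ξ : ℝ, Fb ξ := by
  set u : ℝ → ℂ := fun x => ∫ ξ : ℝ, Complex.exp (Complex.I * (x:ℂ) * (ξ:ℂ)) * G ξ with hudef
  set e : ℝ → ℝ := fun x => Real.exp (-ε * x^2) with hedef
  set Kr : ℝ → ℝ := fun t => Real.sqrt (π/ε) * Real.exp (-(1/(4*ε)) * t^2) with hKrdef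
  set M : ℝ := ∫ ξ : ℝ, ‖G ξ‖ with hMdef
  have hM0 : 0 ≤ M := integral_nonneg fun ξ => norm_nonneg _
  have he_int : Integrable e := integrable_exp_neg_mul_sq hε
  have he_cont : Continuous e := by fun_prop
  have he_nonneg : ∀ x, 0 ≤ e x := fun x => Real.exp_nonneg _
  have hKr_nonneg : ∀ t, 0 ≤ Kr t := fun t => by positivity
  have hKr_cont : Continuous Kr := by fun_prop
  have hKr_le : ∀ t, Kr t ≤ Real.sqrt (π/ε) := fun t => by
    have h1 : Real.exp (-(1/(4*ε)) * t^2) ≤ 1 := by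
      rw [Real.exp_le_one_iff]
      have h5 : (0:ℝ) ≤ 1/(4*ε) := by positivity
      nlinarith [sq_nonneg t]
    calc Kr t ≤ Real.sqrt (π/ε) * 1 := by
          exact mul_le_mul_of_nonneg_left h1 (Real.sqrt_nonneg _)
      _ = _ := mul_one _
  have hucont : Continuous u := u_continuous G hGcont hGint
  have hubd : ∀ x, ‖u x‖ ≤ M := fun x => u_norm_le G x
  have hG0 : ∀ ξ, 0 ≤ ‖G ξ‖ := fun ξ => norm_nonneg _
  -- the inner kernel computation
  have hW : ∀ η : ℝ, ∫ x : ℝ, (e x : ℂ) * u x * Complex.exp (-(Complex.I * (x:ℂ) * (η:ℂ)))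
      = ∫ ξ : ℝ, G ξ * ((Kr (ξ - η) : ℝ) : ℂ) := by
    intro η
    have hexpand : ∀ x : ℝ, (e x : ℂ) * u x * Complex.exp (-(Complex.I * (x:ℂ) * (η:ℂ)))
        = ∫ ξ : ℝ, (e x : ℂ) * (Complex.exp (Complex.I * (x:ℂ) * (ξ:ℂ)) * G ξ) *
            Complex.exp (-(Complex.I * (x:ℂ) * (η:ℂ))) := by
      intro x
      rw [hudef]
      rw [← MeasureTheory.integral_const_mul, ← MeasureTheory.integral_mul_const]
    have hBint : Integrable (Function.uncurry fun x ξ : ℝ =>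
        (e x : ℂ) * (Complex.exp (Complex.I * (x:ℂ) * (ξ:ℂ)) * G ξ) *
          Complex.exp (-(Complex.I * (x:ℂ) * (η:ℂ)))) (volume.prod volume) := by
      apply Integrable.mono' (g := fun p : ℝ × ℝ => e p.1 * ‖G p.2‖)
      · exact he_int.mul_prod hGint.norm
      · apply Continuous.aestronglyMeasurable
        apply Continuous.mul
        apply Continuous.mul
        · exact (Complex.continuous_ofReal.comp (he_cont.comp continuous_fst))
        · exact (Complex.continuous_exp.comp (by fun_prop)).mul (hGcont.comp continuous_snd)
        · exact Complex.continuous_exp.comp (by fun_prop)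
      · filter_upwards with p
        show ‖(e p.1 : ℂ) * (Complex.exp (Complex.I * (p.1:ℂ) * (p.2:ℂ)) * G p.2) *
            Complex.exp (-(Complex.I * (p.1:ℂ) * (η:ℂ)))‖ ≤ e p.1 * ‖G p.2‖
        rw [norm_mul, norm_mul, norm_mul]
        rw [abs_exp_I_mul_mul]
        have : ‖Complex.exp (-(Complex.I * (p.1:ℂ) * (η:ℂ)))‖ = 1 := by
          rw [Complex.norm_exp]
          have : (-(Complex.I * (p.1:ℂ) * (η:ℂ))).re = 0 := by simp [Complex.mul_re]
          rw [this, Real.exp_zero]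
        rw [this, mul_one, one_mul, Complex.norm_real, Real.norm_eq_abs,
          _root_.abs_of_nonneg (he_nonneg _)]
    calc ∫ x : ℝ, (e x : ℂ) * u x * Complex.exp (-(Complex.I * (x:ℂ) * (η:ℂ)))
        = ∫ x : ℝ, ∫ ξ : ℝ, (e x : ℂ) * (Complex.exp (Complex.I * (x:ℂ) * (ξ:ℂ)) * G ξ) *
            Complex.exp (-(Complex.I * (x:ℂ) * (η:ℂ))) :=
          integral_congr_ae (.of_forall hexpand)
      _ = ∫ ξ : ℝ, ∫ x : ℝ, (e x : ℂ) * (Complex.exp (Complex.I * (x:ℂ) * (ξ:ℂ)) * G ξ) *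
            Complex.exp (-(Complex.I * (x:ℂ) * (η:ℂ))) := integral_integral_swap hBint
      _ = ∫ ξ : ℝ, G ξ * ((Kr (ξ - η) : ℝ) : ℂ) := by
          refine integral_congr_ae (.of_forall fun ξ => ?_)
          have hpt : ∀ x : ℝ, (e x : ℂ) * (Complex.exp (Complex.I * (x:ℂ) * (ξ:ℂ)) * G ξ) *
              Complex.exp (-(Complex.I * (x:ℂ) * (η:ℂ)))
              = G ξ * (Complex.exp (Complex.I * ((ξ - η : ℝ):ℂ) * (x:ℂ)) *
                  Complex.exp (-(ε:ℂ) * (x:ℂ)^2)) := by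
            intro x
            have h1 : ((e x : ℝ) : ℂ) = Complex.exp (-(ε:ℂ) * (x:ℂ)^2) := by
              simp only [hedef]
              rw [Complex.ofReal_exp]
              norm_cast
            have h2 : Complex.exp (Complex.I*(x:ℂ)*(ξ:ℂ)) *
                Complex.exp (-(Complex.I*(x:ℂ)*(η:ℂ)))
                = Complex.exp (Complex.I * ((ξ - η:ℝ):ℂ) * (x:ℂ)) := by
              rw [← Complex.exp_add]
              congr 1
              push_cast
              ring
            rw [h1, ← h2]
            ring
          show (∫ x : ℝ, (e x : ℂ) * (Complex.exp (Complex.I * (x:ℂ) * (ξ:ℂ)) * G ξ) *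
              Complex.exp (-(Complex.I * (x:ℂ) * (η:ℂ)))) = G ξ * ((Kr (ξ - η) : ℝ) : ℂ)
          rw [integral_congr_ae (.of_forall hpt), MeasureTheory.integral_const_mul,
            kernel_eq hε (ξ - η)]
  -- conjugate of u
  have hnormexp : ∀ x η : ℝ, ‖Complex.exp (-(Complex.I * (x:ℂ) * (η:ℂ)))‖ = 1 := by
    intro x η
    rw [Complex.norm_exp]
    have : (-(Complex.I * (x:ℂ) * (η:ℂ))).re = 0 := by simp [Complex.mul_re]
    rw [this, Real.exp_zero]
  have hconj : ∀ x : ℝ, (starRingEnd ℂ) (u x)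
      = ∫ η : ℝ, Complex.exp (-(Complex.I * (x:ℂ) * (η:ℂ))) * (starRingEnd ℂ) (G η) := by
    intro x
    rw [hudef]
    rw [← integral_conj]
    refine integral_congr_ae (.of_forall fun η => ?_)
    show (starRingEnd ℂ) (Complex.exp (Complex.I * (x:ℂ) * (η:ℂ)) * G η) = _
    rw [map_mul, ← Complex.exp_conj]
    congr 2
    simp [map_mul, Complex.conj_ofReal]
  have hA1 : ∀ x : ℝ, (e x : ℂ) * (u x * (starRingEnd ℂ) (u x))
      = ∫ η : ℝ, ((e x : ℂ) * u x * Complex.exp (-(Complex.I * (x:ℂ) * (η:ℂ)))) *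
          (starRingEnd ℂ) (G η) := by
    intro x
    rw [hconj x]
    rw [show (e x : ℂ) * (u x * ∫ η : ℝ, Complex.exp (-(Complex.I * (x:ℂ) * (η:ℂ))) *
          (starRingEnd ℂ) (G η)) = ((e x : ℂ) * u x) *
        ∫ η : ℝ, Complex.exp (-(Complex.I * (x:ℂ) * (η:ℂ))) * (starRingEnd ℂ) (G η) from by
      ring]
    rw [← MeasureTheory.integral_const_mul]
    refine integral_congr_ae (.of_forall fun η => ?_)
    ring
  set T : ℂ := ∫ x : ℝ, ∫ η : ℝ, ((e x : ℂ) * u x *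
      Complex.exp (-(Complex.I * (x:ℂ) * (η:ℂ)))) * (starRingEnd ℂ) (G η) with hTdef
  have hTre : ((∫ x : ℝ, e x * (‖u x‖)^2 : ℝ) : ℂ) = T := by
    have hor : ((∫ x : ℝ, e x * (‖u x‖)^2 : ℝ) : ℂ)
        = ∫ x : ℝ, ((e x * (‖u x‖)^2 : ℝ) : ℂ) := (integral_ofReal (𝕜 := ℂ)).symm
    rw [hor, hTdef]
    refine integral_congr_ae (.of_forall fun x => ?_)
    show ((e x * ‖u x‖ ^ 2 : ℝ) : ℂ)
        = ∫ η : ℝ, ((e x : ℂ) * u x * Complex.exp (-(Complex.I * (x:ℂ) * (η:ℂ)))) *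
            (starRingEnd ℂ) (G η)
    rw [← hA1 x, Complex.mul_conj]
    norm_cast
    rw [Complex.sq_norm]
  have hAint : Integrable (Function.uncurry fun x η : ℝ =>
      ((e x : ℂ) * u x * Complex.exp (-(Complex.I * (x:ℂ) * (η:ℂ)))) * (starRingEnd ℂ) (G η))
      (volume.prod volume) := by
    apply Integrable.mono' (g := fun p : ℝ × ℝ => (e p.1 * M) * ‖G p.2‖)
    · exact (he_int.mul_const M).mul_prod hGint.norm
    · apply Continuous.aestronglyMeasurable
      refine Continuous.mul (Continuous.mul (Continuous.mul ?_ ?_) ?_) ?_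
      · exact Complex.continuous_ofReal.comp (he_cont.comp continuous_fst)
      · exact hucont.comp continuous_fst
      · exact Complex.continuous_exp.comp (by fun_prop)
      · exact Complex.continuous_conj.comp (hGcont.comp continuous_snd)
    · filter_upwards with p
      show ‖((e p.1 : ℂ) * u p.1 * Complex.exp (-(Complex.I * (p.1:ℂ) * (p.2:ℂ)))) *
          (starRingEnd ℂ) (G p.2)‖ ≤ (e p.1 * M) * ‖G p.2‖
      rw [norm_mul, norm_mul, norm_mul, RCLike.norm_conj, hnormexp, mul_one,
        Complex.norm_real, Real.norm_eq_abs, _root_.abs_of_nonneg (he_nonneg _)]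
      exact mul_le_mul_of_nonneg_right
        (mul_le_mul_of_nonneg_left (hubd _) (he_nonneg _)) (norm_nonneg _)
  have hTswap : T = ∫ η : ℝ, (∫ ξ : ℝ, G ξ * ((Kr (ξ - η) : ℝ):ℂ)) * (starRingEnd ℂ) (G η) := by
    rw [hTdef, integral_integral_swap hAint]
    refine integral_congr_ae (.of_forall fun η => ?_)
    show (∫ x : ℝ, (e x : ℂ) * u x * Complex.exp (-(Complex.I * (x:ℂ) * (η:ℂ))) *
        (starRingEnd ℂ) (G η)) = _
    rw [MeasureTheory.integral_mul_const, hW η]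
  -- the Q function
  have hKr_int : Integrable Kr := Kr_integrable hε
  set Q : ℝ → ℝ := fun η => ∫ ξ : ℝ, Fb ξ * Kr (ξ - η) with hQdef
  have hP2int : Integrable (Function.uncurry fun ξ η : ℝ => Fb ξ * Kr (ξ - η))
      (volume.prod volume) := by
    refine (integrable_prod_iff ?_).2 ⟨?_, ?_⟩
    · exact ((hFb_cont.comp continuous_fst).mul
        (hKr_cont.comp (continuous_fst.sub continuous_snd))).aestronglyMeasurable
    · filter_upwards with ξ
      exact (hKr_int.comp_sub_left ξ).const_mul (Fb ξ)
    · have heq : ∀ ξ : ℝ, (∫ η : ℝ, ‖Fb ξ * Kr (ξ - η)‖) = Fb ξ * (2*π) := by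
        intro ξ
        have h5 : ∀ η : ℝ, ‖Fb ξ * Kr (ξ - η)‖ = Fb ξ * Kr (ξ - η) := fun η =>
          Real.norm_of_nonneg (mul_nonneg (hFb_nonneg ξ) (hKr_nonneg _))
        rw [integral_congr_ae (.of_forall h5), MeasureTheory.integral_const_mul,
          integral_sub_left_eq_self Kr volume ξ, Kr_total hε]
      exact (hFb_int.mul_const (2*π)).congr (.of_forall fun ξ => (heq ξ).symm)
  have hKshift1 : ∀ η : ℝ, (∫ ξ : ℝ, Kr (ξ - η)) = 2*π := fun η => by
    rw [integral_sub_right_eq_self Kr η]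
    exact Kr_total hε
  have hQint : Integrable Q := by
    have := hP2int.integral_prod_right
    simpa [Function.uncurry] using this
  have hQsum : (∫ η : ℝ, Q η) = 2*π * ∫ ξ : ℝ, Fb ξ := by
    have h6 : (∫ η : ℝ, Q η) = ∫ ξ : ℝ, ∫ η : ℝ, Fb ξ * Kr (ξ - η) :=
      (integral_integral_swap hP2int).symm
    rw [h6]
    have h7 : ∀ ξ : ℝ, (∫ η : ℝ, Fb ξ * Kr (ξ - η)) = Fb ξ * (2*π) := by
      intro ξ
      rw [MeasureTheory.integral_const_mul, integral_sub_left_eq_self Kr volume ξ, Kr_total hε]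
    rw [integral_congr_ae (.of_forall h7), MeasureTheory.integral_mul_const]
    ring
  -- pointwise bound
  have hI1 : ∀ η : ℝ, Integrable (fun ξ => Fb ξ * Kr (ξ - η)) := by
    intro η
    have hmeas : AEStronglyMeasurable (fun ξ : ℝ => Kr (ξ - η)) volume := by
      apply Continuous.aestronglyMeasurable
      exact hKr_cont.comp (continuous_id.sub continuous_const)
    have := Integrable.bdd_mul hFb_int hmeas
      (c := Real.sqrt (π/ε)) (.of_forall fun ξ => by
        rw [Real.norm_of_nonneg (hKr_nonneg _)]; exact hKr_le _)
    exact this.congr (.of_forall fun ξ => mul_comm _ _)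
  have hI2 : ∀ η : ℝ, Integrable (fun ξ => Fb η * Kr (ξ - η)) := fun η =>
    (hKr_int.comp_sub_right η).const_mul (Fb η)
  have hpt : ∀ η : ℝ, ‖(∫ ξ : ℝ, G ξ * ((Kr (ξ - η) : ℝ):ℂ)) * (starRingEnd ℂ) (G η)‖
      ≤ (1/2) * Q η + π * Fb η := by
    intro η
    rw [norm_mul, RCLike.norm_conj]
    have h1 : ‖∫ ξ : ℝ, G ξ * ((Kr (ξ - η) : ℝ):ℂ)‖
        ≤ ∫ ξ : ℝ, ‖G ξ‖ * Kr (ξ - η) := by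
      refine (norm_integral_le_integral_norm _).trans (le_of_eq ?_)
      refine integral_congr_ae (.of_forall fun ξ => ?_)
      show ‖G ξ * ((Kr (ξ - η) : ℝ):ℂ)‖ = _
      rw [norm_mul, Complex.norm_real, Real.norm_of_nonneg (hKr_nonneg _)]
    have h2 : (∫ ξ : ℝ, ‖G ξ‖ * Kr (ξ - η)) * ‖G η‖
        = ∫ ξ : ℝ, ‖G ξ‖ * Kr (ξ - η) * ‖G η‖ := by
      rw [← MeasureTheory.integral_mul_const]
    have h3 : (∫ ξ : ℝ, ‖G ξ‖ * Kr (ξ - η) * ‖G η‖)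
        ≤ ∫ ξ : ℝ, ((Fb ξ + Fb η)/2) * Kr (ξ - η) := by
      apply integral_mono_of_nonneg
      · filter_upwards with ξ
        have := hG0 ξ; have := hG0 η; have := hKr_nonneg (ξ - η)
        positivity
      · have h8 : (fun ξ : ℝ => ((Fb ξ + Fb η)/2) * Kr (ξ - η))
            = fun ξ => (1/2) * (Fb ξ * Kr (ξ - η)) + (1/2) * (Fb η * Kr (ξ - η)) :=
          funext fun ξ => by ring
        rw [h8]
        exact ((hI1 η).const_mul _).add ((hI2 η).const_mul _)
      · filter_upwards with ξ
        calc ‖G ξ‖ * Kr (ξ - η) * ‖G η‖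
            = (‖G ξ‖ * ‖G η‖) * Kr (ξ - η) := by ring
          _ ≤ ((Fb ξ + Fb η)/2) * Kr (ξ - η) :=
            mul_le_mul_of_nonneg_right (hGb ξ η) (hKr_nonneg _)
    have h4 : (∫ ξ : ℝ, ((Fb ξ + Fb η)/2) * Kr (ξ - η)) = (1/2) * Q η + π * Fb η := by
      have h8 : (fun ξ : ℝ => ((Fb ξ + Fb η)/2) * Kr (ξ - η))
          = fun ξ => (1/2) * (Fb ξ * Kr (ξ - η)) + (1/2) * (Fb η * Kr (ξ - η)) :=
        funext fun ξ => by ring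
      rw [h8, integral_add ((hI1 η).const_mul _) ((hI2 η).const_mul _),
        MeasureTheory.integral_const_mul, MeasureTheory.integral_const_mul,
        MeasureTheory.integral_const_mul, hKshift1 η]
      rw [hQdef]
      ring
    calc ‖∫ ξ : ℝ, G ξ * ((Kr (ξ - η) : ℝ):ℂ)‖ * ‖G η‖
        ≤ (∫ ξ : ℝ, ‖G ξ‖ * Kr (ξ - η)) * ‖G η‖ :=
          mul_le_mul_of_nonneg_right h1 (norm_nonneg _)
      _ = ∫ ξ : ℝ, ‖G ξ‖ * Kr (ξ - η) * ‖G η‖ := h2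
      _ ≤ ∫ ξ : ℝ, ((Fb ξ + Fb η)/2) * Kr (ξ - η) := h3
      _ = (1/2) * Q η + π * Fb η := h4
  have hup_int : Integrable (fun η => (1/2) * Q η + π * Fb η) :=
    (hQint.const_mul _).add (hFb_int.const_mul _)
  have hTbound : T.re ≤ 2*π * ∫ ξ : ℝ, Fb ξ := by
    calc T.re ≤ ‖T‖ := Complex.re_le_norm T
      _ = ‖T‖ := rfl
      _ ≤ ∫ η : ℝ, ‖(∫ ξ : ℝ, G ξ * ((Kr (ξ - η) : ℝ):ℂ)) * (starRingEnd ℂ) (G η)‖ := by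
          rw [hTswap]
          exact norm_integral_le_integral_norm _
      _ ≤ ∫ η : ℝ, ((1/2) * Q η + π * Fb η) :=
          integral_mono_of_nonneg (.of_forall fun η => norm_nonneg _) hup_int
            (.of_forall hpt)
      _ = (1/2) * (∫ η : ℝ, Q η) + π * ∫ η : ℝ, Fb η := by
          rw [integral_add (hQint.const_mul _) (hFb_int.const_mul _),
            MeasureTheory.integral_const_mul, MeasureTheory.integral_const_mul]
      _ = 2*π * ∫ ξ : ℝ, Fb ξ := by rw [hQsum]; ring
  have hfin : (∫ x : ℝ, e x * (‖u x‖)^2) = T.re := by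
    have h9 := congrArg Complex.re hTre
    simpa using h9
  calc (∫ x : ℝ, e x * (‖u x‖)^2) = T.re := hfin
    _ ≤ 2*π * ∫ ξ : ℝ, Fb ξ := hTbound


/-- `L²` bound of the angular spectrum representation on horizontal lines: for every
`a ≥ h`, `x₁ ↦ u(x₁,a)` is square integrable on `ℝ` and
`∫ |u(x₁,a)|² dx₁ ≤ 2π ∫ |F(ξ)|² dξ`. -/
theorem asr_L2_bound (k : ℂ) (hk : 0 ≤ (k ^ 2).im) (h : ℝ) (F : SchwartzMap ℝ ℂ)
    (a : ℝ) (ha : h ≤ a) :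
    Integrable (fun x₁ : ℝ => ‖asr k h F (x₁, a)‖ ^ 2) ∧
      ∫ x₁ : ℝ, ‖asr k h F (x₁, a)‖ ^ 2
        ≤ 2 * Real.pi * ∫ ξ : ℝ, ‖F ξ‖ ^ 2 := by
  set Fb : ℝ → ℝ := fun ξ => ‖F ξ‖^2 with hFbdef
  set G : ℝ → ℂ := fun ξ =>
    Complex.exp (Complex.I * ((a - h : ℝ):ℂ) * rho (k^2 - (ξ:ℂ)^2)) * F ξ with hGdef
  have hGcont : Continuous G := by
    apply Continuous.mul ?_ F.continuous
    exact Complex.continuous_exp.comp (continuous_const.mul (continuous_rho.comp (by fun_prop)))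
  have hGabs : ∀ ξ, ‖G ξ‖ ≤ ‖F ξ‖ := by
    intro ξ
    show ‖Complex.exp (Complex.I * ((a - h : ℝ):ℂ) * rho (k^2 - (ξ:ℂ)^2)) * F ξ‖
      ≤ ‖F ξ‖
    rw [norm_mul]
    exact mul_le_of_le_one_left (norm_nonneg _) (abs_exp_le (a - h) (by linarith) _)
  have hGint : Integrable G := F.integrable.mono hGcont.aestronglyMeasurable
    (.of_forall fun ξ => by
      exact hGabs ξ)
  set u : ℝ → ℂ := fun x => ∫ ξ : ℝ, Complex.exp (Complex.I * (x:ℂ) * (ξ:ℂ)) * G ξ with hudef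
  have hasr : ∀ x : ℝ, asr k h F (x, a) = u x := by
    intro x
    rw [hudef]
    unfold asr
    refine integral_congr_ae (.of_forall fun ξ => ?_)
    show Complex.exp (Complex.I * (((a - h : ℝ):ℂ) * rho (k^2 - (ξ:ℂ)^2) + (x:ℂ)*(ξ:ℂ))) * F ξ
        = Complex.exp (Complex.I * (x:ℂ) * (ξ:ℂ)) * G ξ
    simp only [hGdef]
    rw [show Complex.I * (((a - h : ℝ):ℂ) * rho (k^2 - (ξ:ℂ)^2) + (x:ℂ)*(ξ:ℂ))
        = (Complex.I * (x:ℂ) * (ξ:ℂ)) + Complex.I * ((a - h:ℝ):ℂ) * rho (k^2 - (ξ:ℂ)^2)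
      from by ring, Complex.exp_add]
    ring
  have hucont : Continuous u := u_continuous G hGcont hGint
  have hFb_cont : Continuous Fb := (continuous_norm.comp F.continuous).pow 2
  have hFb_nonneg : ∀ ξ, 0 ≤ Fb ξ := fun ξ => sq_nonneg _
  have hFb_int : Integrable Fb := by
    obtain ⟨C, hC⟩ := F.decay 0 0
    have hC' : ∀ x : ℝ, ‖F x‖ ≤ C := fun x => by
      have := hC.2 x; simpa using this
    have h1 := Integrable.bdd_mul ((F.integrable (μ := volume)).norm)
      ((continuous_norm.comp F.continuous).aestronglyMeasurable)
      (c := C) (.of_forall fun x => by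
        show ‖‖F x‖‖ ≤ C
        rw [Real.norm_eq_abs, _root_.abs_of_nonneg (norm_nonneg _)]; exact hC' x)
    refine h1.congr (.of_forall fun ξ => ?_)
    show ‖F ξ‖ * ‖F ξ‖ = ‖F ξ‖^2
    rw [sq]
  have hGb : ∀ ξ η, ‖G ξ‖ * ‖G η‖ ≤ (Fb ξ + Fb η)/2 := by
    intro ξ η
    calc ‖G ξ‖ * ‖G η‖ ≤ ‖F ξ‖ * ‖F η‖ :=
        mul_le_mul (hGabs ξ) (hGabs η) (norm_nonneg _) (norm_nonneg _)
      _ ≤ (Fb ξ + Fb η)/2 := by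
        show _ ≤ (‖F ξ‖^2 + ‖F η‖^2)/2
        nlinarith [sq_nonneg (‖F ξ‖ - ‖F η‖)]
  have hkey : ∀ ε : ℝ, 0 < ε → (∫ x : ℝ, Real.exp (-ε*x^2) * (‖u x‖)^2)
      ≤ 2 * Real.pi * ∫ ξ : ℝ, Fb ξ := fun ε hε =>
    key_eps G hGcont hGint Fb hFb_cont hFb_int hFb_nonneg hGb hε
  set g : ℝ → ℝ := fun x => (‖u x‖)^2 with hgdef
  have hrw : (fun x₁ : ℝ => ‖asr k h F (x₁, a)‖ ^ 2) = g :=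
    funext fun x => by rw [hasr x]
  have hgcont : Continuous g := (continuous_norm.comp hucont).pow 2
  have hg0 : ∀ x, 0 ≤ g x := fun x => sq_nonneg _
  set M : ℝ := ∫ ξ : ℝ, ‖G ξ‖ with hMdef
  have hgbd : ∀ x, g x ≤ M^2 := by
    intro x
    have h1 : ‖u x‖ ≤ M := by
      exact u_norm_le G x
    show (‖u x‖)^2 ≤ M^2
    nlinarith [norm_nonneg (u x)]
  set εn : ℕ → ℝ := fun n => 1/(n+1) with hεdef
  have hεpos : ∀ n, 0 < εn n := fun n => by positivity
  set w : ℕ → ℝ → ℝ := fun n x => Real.exp (-(εn n)*x^2) * g x with hwdef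
  have hw_nonneg : ∀ n x, 0 ≤ w n x := fun n x => mul_nonneg (Real.exp_nonneg _) (hg0 x)
  have hw_cont : ∀ n, Continuous (w n) := fun n =>
    (by fun_prop : Continuous fun x:ℝ => Real.exp (-(εn n)*x^2)).mul hgcont
  have hw_int : ∀ n, Integrable (w n) := by
    intro n
    apply Integrable.mono' ((integrable_exp_neg_mul_sq (hεpos n)).mul_const (M^2))
      (hw_cont n).aestronglyMeasurable
    filter_upwards with x
    rw [Real.norm_of_nonneg (hw_nonneg n x)]
    exact mul_le_mul_of_nonneg_left (hgbd x) (Real.exp_nonneg _)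
  have hw_le : ∀ n, (∫ x : ℝ, w n x) ≤ 2*Real.pi*∫ ξ : ℝ, Fb ξ := fun n =>
    hkey (εn n) (hεpos n)
  have hw_mono : ∀ x : ℝ, Monotone fun n => w n x := by
    intro x n m hnm
    show Real.exp (-(εn n)*x^2) * g x ≤ Real.exp (-(εn m)*x^2) * g x
    apply mul_le_mul_of_nonneg_right _ (hg0 x)
    apply Real.exp_le_exp.2
    have h1 : εn m ≤ εn n := by
      show 1/((m:ℝ)+1) ≤ 1/((n:ℝ)+1)
      apply one_div_le_one_div_of_le (by positivity)
      have : (n:ℝ) ≤ m := Nat.cast_le.2 hnm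
      linarith
    nlinarith [sq_nonneg x]
  have hw_tendsto : ∀ x : ℝ, Filter.Tendsto (fun n => w n x) Filter.atTop (nhds (g x)) := by
    intro x
    have h1 : Filter.Tendsto (fun n : ℕ => -(εn n) * x^2) Filter.atTop (nhds 0) := by
      have h0 := tendsto_one_div_add_atTop_nhds_zero_nat (𝕜 := ℝ)
      have h2 := h0.neg.mul_const (x^2)
      simp only [neg_zero, zero_mul] at h2
      exact h2
    have h2 : Filter.Tendsto (fun n : ℕ => Real.exp (-(εn n)*x^2)) Filter.atTop (nhds 1) := by
      have h3 := (Real.continuous_exp.tendsto 0).comp h1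
      simpa [Function.comp_def] using h3
    have h4 := h2.mul_const (g x)
    show Filter.Tendsto (fun n => Real.exp (-(εn n)*x^2) * g x) Filter.atTop (nhds (g x))
    simpa using h4
  have hfn_meas : ∀ n, Measurable fun x => ENNReal.ofReal (w n x) := fun n =>
    ENNReal.measurable_ofReal.comp (hw_cont n).measurable
  have hsup : ∀ x, (⨆ n, ENNReal.ofReal (w n x)) = ENNReal.ofReal (g x) := by
    intro x
    have hmono : Monotone fun n => ENNReal.ofReal (w n x) := fun i j hij =>
      ENNReal.ofReal_le_ofReal (hw_mono x hij)
    have h1 : Filter.Tendsto (fun n => ENNReal.ofReal (w n x)) Filter.atTop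
        (nhds (ENNReal.ofReal (g x))) :=
      (ENNReal.continuous_ofReal.tendsto _).comp (hw_tendsto x)
    exact tendsto_nhds_unique (tendsto_atTop_iSup hmono) h1
  have hL : (∫⁻ x : ℝ, ENNReal.ofReal (g x)) ≤ ENNReal.ofReal (2*Real.pi*∫ ξ : ℝ, Fb ξ) := by
    have h1 : (∫⁻ x : ℝ, ENNReal.ofReal (g x)) = ⨆ n, ∫⁻ x : ℝ, ENNReal.ofReal (w n x) := by
      rw [← lintegral_iSup hfn_meas
        (fun i j hij x => ENNReal.ofReal_le_ofReal (hw_mono x hij))]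
      exact lintegral_congr fun x => (hsup x).symm
    rw [h1]
    apply iSup_le
    intro n
    rw [← ofReal_integral_eq_lintegral_ofReal (hw_int n) (.of_forall (hw_nonneg n))]
    exact ENNReal.ofReal_le_ofReal (hw_le n)
  have hCF0 : 0 ≤ 2*Real.pi*∫ ξ : ℝ, Fb ξ := by
    have h0 : 0 ≤ ∫ ξ : ℝ, Fb ξ := integral_nonneg hFb_nonneg
    positivity
  have hgint : Integrable g := by
    refine ⟨hgcont.aestronglyMeasurable, ?_⟩
    rw [hasFiniteIntegral_iff_ofReal (.of_forall hg0)]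
    exact lt_of_le_of_lt hL ENNReal.ofReal_lt_top
  constructor
  · rw [hrw]; exact hgint
  · rw [hrw]
    have h2 : (∫ x : ℝ, g x) = (∫⁻ x : ℝ, ENNReal.ofReal (g x)).toReal := by
      rw [integral_eq_lintegral_of_nonneg_ae (.of_forall hg0) hgcont.aestronglyMeasurable]
    rw [h2]
    exact ENNReal.toReal_le_of_le_ofReal hCF0 hL
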